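/- Let a > 0, n ≥ 2, and let x_1,…,x_n, y_1,…,y_n be 2n jointly independent real random variables, each uniformly distributed on (−a, a). With υ = a²/3, E[υ·n·Σ_{i=1}^n x_i² − (Σ_{i=1}^n x_i y_i)²] = (4/3)·E[υ·(Σ_{i=1}^n |x_i|)² − (Σ_{i=1}^n x_i y_i)²]; i.e., replacing the L² data structure with the L¹ data structure improves the average sample efficiency of inner product estimation by a factor of 4/3. -/

import Mathlib

open Finset MeasureTheory ProbabilityTheory

lemma unif_int (a : ℝ) (ha : 0 < a) (f : ℝ → ℝ) :
    ∫ x, f x ∂((ENNReal.ofReal (2 * a))⁻¹ • volume.restrict (Set.Ioo (-a) a))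
      = (2 * a)⁻¹ * ∫ x in (-a)..a, f x := by
  rw [integral_smul_measure, ENNReal.toReal_inv, ENNReal.toReal_ofReal (by linarith),
    intervalIntegral.integral_of_le (by linarith), MeasureTheory.integral_Ioc_eq_integral_Ioo,
    smul_eq_mul]

lemma unif_m1 (a : ℝ) (ha : 0 < a) :
    ∫ x, x ∂((ENNReal.ofReal (2 * a))⁻¹ • volume.restrict (Set.Ioo (-a) a)) = 0 := by
  rw [unif_int a ha (fun x => x), integral_id]
  ring

lemma unif_m2 (a : ℝ) (ha : 0 < a) :
    ∫ x, x ^ 2 ∂((ENNReal.ofReal (2 * a))⁻¹ • volume.restrict (Set.Ioo (-a) a)) = a ^ 2 / 3 := by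
  rw [unif_int a ha (fun x => x ^ 2), integral_pow]
  field_simp
  ring

lemma unif_abs (a : ℝ) (ha : 0 < a) :
    ∫ x, |x| ∂((ENNReal.ofReal (2 * a))⁻¹ • volume.restrict (Set.Ioo (-a) a)) = a / 2 := by
  rw [unif_int a ha (fun x => |x|)]
  have h1 : ∫ x in (-a)..(0:ℝ), |x| = a ^ 2 / 2 := by
    rw [intervalIntegral.integral_congr (g := fun x => -x)
      (fun x hx => abs_of_nonpos (by rw [Set.uIcc_of_le (by linarith)] at hx; exact hx.2)),
      intervalIntegral.integral_neg, integral_id]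
    ring
  have h2 : ∫ x in (0:ℝ)..a, |x| = a ^ 2 / 2 := by
    rw [intervalIntegral.integral_congr (g := fun x => x)
      (fun x hx => abs_of_nonneg (by rw [Set.uIcc_of_le (by linarith)] at hx; exact hx.1)),
      integral_id]
    ring
  rw [← intervalIntegral.integral_add_adjacent_intervals (b := (0:ℝ))
    intervalIntegral.intervalIntegrable_id.abs intervalIntegral.intervalIntegrable_id.abs, h1, h2]
  field_simp
  ring

lemma double_sum_diag (n : ℕ) (A B : ℝ) :
    ∑ i : Fin n, ∑ j : Fin n, (if i = j then A else B) = n * A + n * (n - 1) * B := by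
  have h : ∀ i : Fin n, ∑ j : Fin n, (if i = j then A else B) = A + (n - 1) * B := by
    intro i
    have he : (fun j : Fin n => if i = j then A else B)
        = fun j => B + if i = j then (A - B) else 0 := by
      funext j; by_cases h : i = j <;> simp [h]
    rw [he, Finset.sum_add_distrib, Finset.sum_ite_eq, Finset.sum_const]
    simp [Finset.card_univ]
    ring
  rw [Finset.sum_congr rfl fun i _ => h i, Finset.sum_const]
  simp [Finset.card_univ]
  ring

/-- For i.i.d. entries uniform on `(-a, a)` (so `υ = a²/3`), the `L¹` data
structure improves the average sample efficiency of inner product estimation by a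
factor of `4 / 3`. -/
theorem stmt_7 {Ω : Type*} [MeasurableSpace Ω] (μ : Measure Ω) [IsProbabilityMeasure μ]
    {n : ℕ} (hn : 2 ≤ n) (X Y : Fin n → Ω → ℝ) (a : ℝ) (ha : 0 < a)
    (hmX : ∀ i, Measurable (X i)) (hmY : ∀ i, Measurable (Y i))
    (hindep : iIndepFun (Sum.elim X Y) μ)
    (hdist : ∀ k : Fin n ⊕ Fin n,
      Measure.map (Sum.elim X Y k) μ
        = (ENNReal.ofReal (2 * a))⁻¹ • volume.restrict (Set.Ioo (-a) a)) :
    ∫ ω, (a ^ 2 / 3 * n * ∑ i, (X i ω) ^ 2 - (∑ i, X i ω * Y i ω) ^ 2) ∂μ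
      = (4 / 3) *
        ∫ ω, (a ^ 2 / 3 * (∑ i, |X i ω|) ^ 2 - (∑ i, X i ω * Y i ω) ^ 2) ∂μ := by
  have hmZ : ∀ k, Measurable (Sum.elim X Y k) := by rintro (i | i); exacts [hmX i, hmY i]
  -- moments of each coordinate
  have momU : ∀ (f : ℝ → ℝ), Measurable f → ∀ k, ∫ ω, f (Sum.elim X Y k ω) ∂μ
      = ∫ x, f x ∂((ENNReal.ofReal (2 * a))⁻¹ • volume.restrict (Set.Ioo (-a) a)) := by
    intro f hf k
    rw [← integral_map (hmZ k).aemeasurable hf.aestronglyMeasurable, hdist k]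
  have hEX : ∀ i, ∫ ω, X i ω ∂μ = 0 := fun i => by
    simpa using (momU (fun x => x) measurable_id (Sum.inl i)).trans (unif_m1 a ha)
  have hEY : ∀ i, ∫ ω, Y i ω ∂μ = 0 := fun i => by
    simpa using (momU (fun x => x) measurable_id (Sum.inr i)).trans (unif_m1 a ha)
  have hEX2 : ∀ i, ∫ ω, (X i ω) ^ 2 ∂μ = a ^ 2 / 3 := fun i => by
    simpa using (momU (fun x => x ^ 2) (measurable_id.pow_const 2) (Sum.inl i)).trans
      (unif_m2 a ha)
  have hEY2 : ∀ i, ∫ ω, (Y i ω) ^ 2 ∂μ = a ^ 2 / 3 := fun i => by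
    simpa using (momU (fun x => x ^ 2) (measurable_id.pow_const 2) (Sum.inr i)).trans
      (unif_m2 a ha)
  have hEabs : ∀ i, ∫ ω, |X i ω| ∂μ = a / 2 := fun i => by
    simpa using (momU (fun x => |x|) measurable_abs (Sum.inl i)).trans (unif_abs a ha)
  -- a.e. bounds
  have hb : ∀ k, ∀ᵐ ω ∂μ, Sum.elim X Y k ω ∈ Set.Ioo (-a) a := by
    intro k
    have h0 : μ (Sum.elim X Y k ⁻¹' (Set.Ioo (-a) a)ᶜ) = 0 := by
      rw [← Measure.map_apply (hmZ k) measurableSet_Ioo.compl, hdist k]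
      simp [Measure.restrict_apply measurableSet_Ioo.compl]
    refine (ae_iff).2 ?_
    simpa [Set.preimage, Set.compl_setOf] using h0
  have hbX : ∀ i, ∀ᵐ ω ∂μ, |X i ω| ≤ a :=
    fun i => (hb (Sum.inl i)).mono fun ω h => (abs_lt.2 ⟨h.1, h.2⟩).le
  have hbY : ∀ i, ∀ᵐ ω ∂μ, |Y i ω| ≤ a :=
    fun i => (hb (Sum.inr i)).mono fun ω h => (abs_lt.2 ⟨h.1, h.2⟩).le
  have key_int : ∀ (f : Ω → ℝ) (C : ℝ), Measurable f → (∀ᵐ ω ∂μ, |f ω| ≤ C) →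
      Integrable f μ := fun f C hf h =>
    Integrable.mono' (integrable_const C) hf.aestronglyMeasurable
      (by simpa [Real.norm_eq_abs] using h)
  -- integrability of products
  have hprodXY : ∀ i j, Integrable (fun ω => X i ω * Y i ω * (X j ω * Y j ω)) μ := by
    intro i j
    refine key_int _ (a * a * (a * a)) (by fun_prop) ?_
    filter_upwards [hbX i, hbY i, hbX j, hbY j] with ω h1 h2 h3 h4
    rw [abs_mul, abs_mul, abs_mul]
    have h0 : (0:ℝ) ≤ a := ha.le
    exact mul_le_mul (mul_le_mul h1 h2 (abs_nonneg _) h0)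
      (mul_le_mul h3 h4 (abs_nonneg _) h0) (by positivity) (by positivity)
  have hsqX : ∀ i, Integrable (fun ω => (X i ω) ^ 2) μ := by
    intro i
    refine key_int _ (a ^ 2) (by fun_prop) ?_
    filter_upwards [hbX i] with ω h1
    calc |(X i ω) ^ 2| = |X i ω| ^ 2 := by rw [abs_pow]
      _ ≤ a ^ 2 := pow_le_pow_left₀ (abs_nonneg _) h1 2
  have habs2 : ∀ i j, Integrable (fun ω => |X i ω| * |X j ω|) μ := by
    intro i j
    refine key_int _ (a * a) (by fun_prop) ?_
    filter_upwards [hbX i, hbX j] with ω h1 h2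
    rw [abs_mul, abs_abs, abs_abs]
    exact mul_le_mul h1 h2 (abs_nonneg _) ha.le
  have hintS2 : Integrable (fun ω => (∑ i, X i ω * Y i ω) ^ 2) μ := by
    refine key_int _ ((n * (a * a)) ^ 2) (by fun_prop) ?_
    filter_upwards [ae_all_iff.2 hbX, ae_all_iff.2 hbY] with ω h1 h2
    rw [abs_pow]
    refine pow_le_pow_left₀ (abs_nonneg _) ?_ 2
    calc |∑ i, X i ω * Y i ω| ≤ ∑ i, |X i ω * Y i ω| := Finset.abs_sum_le_sum_abs _ _
      _ ≤ ∑ _i : Fin n, a * a := Finset.sum_le_sum fun i _ => by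
          rw [abs_mul]; exact mul_le_mul (h1 i) (h2 i) (abs_nonneg _) ha.le
      _ = n * (a * a) := by simp [Finset.card_univ]
  have hintSabs : Integrable (fun ω => (∑ i, |X i ω|) ^ 2) μ := by
    refine key_int _ ((n * a) ^ 2) (by fun_prop) ?_
    filter_upwards [ae_all_iff.2 hbX] with ω h1
    rw [abs_pow, abs_of_nonneg (Finset.sum_nonneg fun i _ => abs_nonneg _)]
    refine pow_le_pow_left₀ (Finset.sum_nonneg fun i _ => abs_nonneg _) ?_ 2
    calc (∑ i, |X i ω|) ≤ ∑ _i : Fin n, a := Finset.sum_le_sum fun i _ => h1 i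
      _ = n * a := by simp [Finset.card_univ]
  -- expectation of (∑ X_i Y_i)^2
  have hS2 : ∫ ω, (∑ i, X i ω * Y i ω) ^ 2 ∂μ
      = (n : ℝ) * (a ^ 2 / 3 * (a ^ 2 / 3)) + n * (n - 1) * 0 := by
    have hre : (fun ω => (∑ i, X i ω * Y i ω) ^ 2)
        = fun ω => ∑ i, ∑ j, X i ω * Y i ω * (X j ω * Y j ω) := by
      funext ω; rw [sq, Finset.sum_mul_sum]
    rw [hre, integral_finset_sum _ fun i _ => integrable_finset_sum _ fun j _ => hprodXY i j]
    rw [Finset.sum_congr rfl fun i _ => integral_finset_sum _ fun j _ => hprodXY i j]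
    rw [← double_sum_diag n (a ^ 2 / 3 * (a ^ 2 / 3)) 0]
    refine Finset.sum_congr rfl fun i _ => Finset.sum_congr rfl fun j _ => ?_
    by_cases h : i = j
    · subst h
      simp only [if_pos]
      have hind : IndepFun (fun ω => (X i ω) ^ 2) (fun ω => (Y i ω) ^ 2) μ :=
        (hindep.indepFun (show (Sum.inl i : Fin n ⊕ Fin n) ≠ Sum.inr i by simp)).comp
          (measurable_id.pow_const 2) (measurable_id.pow_const 2)
      have := hind.integral_fun_mul_eq_mul_integral (hsqX i).aestronglyMeasurable
        (key_int _ (a ^ 2) (by fun_prop) ((hbY i).mono fun ω h1 => by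
          rw [abs_pow]; exact pow_le_pow_left₀ (abs_nonneg _) h1 2)).aestronglyMeasurable
      calc ∫ ω, X i ω * Y i ω * (X i ω * Y i ω) ∂μ
          = ∫ ω, (X i ω) ^ 2 * (Y i ω) ^ 2 ∂μ := by
            congr 1; funext ω; ring
        _ = (∫ ω, (X i ω) ^ 2 ∂μ) * ∫ ω, (Y i ω) ^ 2 ∂μ := this
        _ = a ^ 2 / 3 * (a ^ 2 / 3) := by rw [hEX2 i, hEY2 i]
    · simp only [if_neg h]
      have hne : (Sum.inl i : Fin n ⊕ Fin n) ≠ Sum.inl j := by simp [h]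
      have hind : IndepFun (Sum.elim X Y (Sum.inl i) * Sum.elim X Y (Sum.inr i))
          (Sum.elim X Y (Sum.inl j) * Sum.elim X Y (Sum.inr j)) μ :=
        hindep.indepFun_mul_mul hmZ _ _ _ _ (by simp [h]) (by simp) (by simp) (by simp [h])
      have hindi : IndepFun (X i) (Y i) μ :=
        hindep.indepFun (show (Sum.inl i : Fin n ⊕ Fin n) ≠ Sum.inr i by simp)
      have hindj : IndepFun (X j) (Y j) μ :=
        hindep.indepFun (show (Sum.inl j : Fin n ⊕ Fin n) ≠ Sum.inr j by simp)
      have h1 : ∫ ω, X i ω * Y i ω ∂μ = 0 := by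
        rw [hindi.integral_fun_mul_eq_mul_integral (hmX i).aestronglyMeasurable (hmY i).aestronglyMeasurable,
          hEX i, zero_mul]
      have h2 : ∫ ω, X j ω * Y j ω ∂μ = 0 := by
        rw [hindj.integral_fun_mul_eq_mul_integral (hmX j).aestronglyMeasurable (hmY j).aestronglyMeasurable,
          hEX j, zero_mul]
      have := hind.integral_fun_mul_eq_mul_integral
        ((hmX i).mul (hmY i)).aestronglyMeasurable ((hmX j).mul (hmY j)).aestronglyMeasurable
      calc ∫ ω, X i ω * Y i ω * (X j ω * Y j ω) ∂μ
          = (∫ ω, X i ω * Y i ω ∂μ) * ∫ ω, X j ω * Y j ω ∂μ := this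
        _ = 0 := by rw [h1, h2, mul_zero]
  -- expectation of (∑ |X_i|)^2
  have hSabs : ∫ ω, (∑ i, |X i ω|) ^ 2 ∂μ
      = (n : ℝ) * (a ^ 2 / 3) + n * (n - 1) * (a / 2 * (a / 2)) := by
    have hre : (fun ω => (∑ i, |X i ω|) ^ 2)
        = fun ω => ∑ i, ∑ j, |X i ω| * |X j ω| := by
      funext ω; rw [sq, Finset.sum_mul_sum]
    rw [hre, integral_finset_sum _ fun i _ => integrable_finset_sum _ fun j _ => habs2 i j]
    rw [Finset.sum_congr rfl fun i _ => integral_finset_sum _ fun j _ => habs2 i j]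
    rw [← double_sum_diag n (a ^ 2 / 3) (a / 2 * (a / 2))]
    refine Finset.sum_congr rfl fun i _ => Finset.sum_congr rfl fun j _ => ?_
    by_cases h : i = j
    · subst h
      simp only [if_pos]
      calc ∫ ω, |X i ω| * |X i ω| ∂μ = ∫ ω, (X i ω) ^ 2 ∂μ := by
            congr 1; funext ω; rw [abs_mul_abs_self, sq]
        _ = a ^ 2 / 3 := hEX2 i
    · simp only [if_neg h]
      have hind : IndepFun (fun ω => |X i ω|) (fun ω => |X j ω|) μ :=
        (hindep.indepFun (show (Sum.inl i : Fin n ⊕ Fin n) ≠ Sum.inl j by simp [h])).comp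
          measurable_abs measurable_abs
      rw [hind.integral_fun_mul_eq_mul_integral (hmX i).abs.aestronglyMeasurable
        (hmX j).abs.aestronglyMeasurable, hEabs i, hEabs j]
  -- expectation of ∑ X_i^2
  have hSX2 : ∫ ω, ∑ i, (X i ω) ^ 2 ∂μ = (n : ℝ) * (a ^ 2 / 3) := by
    rw [integral_finset_sum _ fun i _ => hsqX i,
      Finset.sum_congr rfl fun i _ => hEX2 i, Finset.sum_const]
    simp [Finset.card_univ]
  -- assemble
  have hint1 : Integrable (fun ω => a ^ 2 / 3 * n * ∑ i, (X i ω) ^ 2) μ :=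
    (integrable_finset_sum _ fun i _ => hsqX i).const_mul _
  have hint2 : Integrable (fun ω => a ^ 2 / 3 * (∑ i, |X i ω|) ^ 2) μ :=
    hintSabs.const_mul _
  rw [integral_sub hint1 hintS2, integral_sub hint2 hintS2, integral_const_mul,
    integral_const_mul, hSX2, hS2, hSabs]
  ring
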